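/- For a real parameter a with 0 < a < 1, let M̄(a) be the 4×4 Hermitian matrix with rows [1, a/(4−2a), 0, 0], [a/(4−2a), 0, 0, 0], [0, 0, 0, 1/2], [0, 0, 1/2, 1]. Then (1−√2)/2 and 1/2 − √(a² + (2−a)²)/(2(2−a)) are eigenvalues of M̄(a), both are strictly negative, and hence M̄(a) is not positive semidefinite. -/

import Mathlib

open Matrix
open scoped ComplexOrder

lemma mem_spec_iff_aux (M : Matrix (Fin 4) (Fin 4) ℂ) (z : ℂ) :
    z ∈ spectrum ℂ M ↔ (algebraMap ℂ (Matrix (Fin 4) (Fin 4) ℂ) z - M).det = 0 := by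
  rw [spectrum.mem_iff, ← not_iff_not, not_not,
    Matrix.isUnit_iff_isUnit_det, isUnit_iff_ne_zero]

lemma det_aux (c z : ℂ) :
    (algebraMap ℂ (Matrix (Fin 4) (Fin 4) ℂ) z -
      !![1, c, 0, 0; c, 0, 0, 0; 0, 0, 0, 1/2; 0, 0, 1/2, 1]).det
    = ((z-1)*z - c^2) * (z*(z-1) - 1/4) := by
  simp [Matrix.det_succ_row_zero, Fin.sum_univ_succ, Matrix.algebraMap_matrix_apply,
    Matrix.submatrix_apply, Fin.succ, Fin.succAbove]
  ring

/-- The backward Choi–Jamiołkowski matrix `M̄(a)` from the paper's decohering-channel example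
has the strictly negative eigenvalues `(1-√2)/2` and `1/2 - √(a² + (2-a)²)/(2(2-a))`, hence is
not positive semidefinite. -/
theorem backward_choi_not_posSemidef (a : ℝ) (ha : 0 < a) (ha' : a < 1)
    (Mbar : Matrix (Fin 4) (Fin 4) ℂ)
    (hMbar : Mbar = !![1, (a : ℂ)/(4 - 2*a), 0, 0;
                      (a : ℂ)/(4 - 2*a), 0, 0, 0;
                      0, 0, 0, 1/2;
                      0, 0, 1/2, 1]) :
    (((1 - Real.sqrt 2)/2 : ℝ) : ℂ) ∈ spectrum ℂ Mbar ∧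
    ((((1:ℝ)/2 - Real.sqrt (a^2 + (2 - a)^2)/(2*(2 - a))) : ℝ) : ℂ) ∈ spectrum ℂ Mbar ∧
    ((1 - Real.sqrt 2)/2 : ℝ) < 0 ∧
    ((1:ℝ)/2 - Real.sqrt (a^2 + (2 - a)^2)/(2*(2 - a))) < 0 ∧
    ¬ Mbar.PosSemidef := by
  have h2a : (0:ℝ) < 2 - a := by linarith
  have hs : Real.sqrt 2 ^ 2 = 2 := Real.sq_sqrt (by norm_num)
  have hsnn : 0 ≤ Real.sqrt 2 := Real.sqrt_nonneg 2
  set t : ℝ := Real.sqrt (a^2 + (2 - a)^2) with ht_def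
  have ht : t ^ 2 = a^2 + (2-a)^2 := Real.sq_sqrt (by positivity)
  have htnn : 0 ≤ t := Real.sqrt_nonneg _
  -- eigenvalue 1
  have hmem1 : (((1 - Real.sqrt 2)/2 : ℝ) : ℂ) ∈ spectrum ℂ Mbar := by
    rw [mem_spec_iff_aux, hMbar, det_aux]
    have hreal : ((1 - Real.sqrt 2)/2) * ((1 - Real.sqrt 2)/2 - 1) - 1/4 = 0 := by
      linear_combination (1/4) * hs
    have hc := congrArg (Complex.ofReal) hreal
    push_cast at hc
    apply mul_eq_zero_of_right
    push_cast
    linear_combination hc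
  -- eigenvalue 2
  have hreal2 : (((1:ℝ)/2 - t/(2*(2 - a))) - 1) * ((1:ℝ)/2 - t/(2*(2 - a)))
      - (a/(4 - 2*a))^2 = 0 := by
    have h4 : (4 - 2*a) ≠ 0 := by linarith
    field_simp
    linear_combination (4*(2-a)^2) * ht
  have hmem2 : ((((1:ℝ)/2 - t/(2*(2 - a))) : ℝ) : ℂ) ∈ spectrum ℂ Mbar := by
    rw [mem_spec_iff_aux, hMbar, det_aux]
    have hc := congrArg (Complex.ofReal) hreal2
    push_cast at hc
    apply mul_eq_zero_of_left
    push_cast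
    linear_combination hc
  -- negativity
  have hneg1 : ((1 - Real.sqrt 2)/2 : ℝ) < 0 := by nlinarith
  have hlt : 2 - a < t := by nlinarith
  have hneg2 : ((1:ℝ)/2 - t/(2*(2 - a))) < 0 := by
    rw [sub_neg, lt_div_iff₀ (by positivity : (0:ℝ) < 2*(2-a))]
    nlinarith
  refine ⟨hmem1, hmem2, hneg1, hneg2, ?_⟩
  -- not PSD
  intro hP
  set v : Fin 4 → ℂ := ![0, 0, 1, ((1 - Real.sqrt 2 : ℝ) : ℂ)] with hv
  have h2 := hP.dotProduct_mulVec_nonneg v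
  have hval : star v ⬝ᵥ Mbar *ᵥ v = ((4 - 3*Real.sqrt 2 : ℝ) : ℂ) := by
    have hsC : ((Real.sqrt 2 : ℝ) : ℂ)^2 = 2 := by
      exact_mod_cast congrArg (Complex.ofReal) hs
    simp [hv, hMbar, dotProduct, Matrix.mulVec, Fin.sum_univ_four,
      Complex.conj_ofReal]
    linear_combination hsC
  rw [hval] at h2
  rw [Complex.zero_le_real] at h2
  nlinarith
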